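/- Let φ : G → H be an epimorphism and U ≤ G of finite index with ker(φ) ≤ U', V = φ(U). Then the kernels of the Artin transfers correspond exactly: φ(ker(T_{G,U})) = ker(T_{H,V}). -/

import Mathlib

open Subgroup Subgroup.leftTransversals

section Nat

variable {G H : Type*} [Group G] [Group H] {A : Type*} [CommGroup A]

/-- the induced bijection of coset spaces -/
noncomputable def cosetEquiv (φ : G →* H) (hφ : Function.Surjective φ) (U : Subgroup G)
    (hU : φ.ker ≤ U) : G ⧸ U ≃ H ⧸ (U.map φ) := by
  refine Equiv.ofBijective (Quotient.map' φ ?_) ⟨?_, ?_⟩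
  · intro x y h
    rw [QuotientGroup.leftRel_apply] at h ⊢
    rw [← map_inv, ← map_mul]
    exact mem_map_of_mem φ h
  · intro x y
    refine Quotient.inductionOn₂' x y fun a b h => ?_
    rw [Quotient.map'_mk'', Quotient.map'_mk''] at h
    apply Quotient.sound'
    have h2 := QuotientGroup.leftRel_apply.mp (Quotient.exact' h)
    rw [QuotientGroup.leftRel_apply]
    obtain ⟨u, hu, heq⟩ := h2
    have : a⁻¹ * b * u⁻¹ ∈ φ.ker := by
      rw [MonoidHom.mem_ker, map_mul, map_mul, map_inv, map_inv, heq, mul_inv_cancel]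
    have := mul_mem (hU this) hu
    rwa [inv_mul_cancel_right] at this
  · intro q
    refine Quotient.inductionOn' q fun h => ?_
    obtain ⟨g, rfl⟩ := hφ h
    exact ⟨Quotient.mk'' g, rfl⟩

theorem cosetEquiv_mk (φ : G →* H) (hφ : Function.Surjective φ) (U : Subgroup G)
    (hU : φ.ker ≤ U) (x : G) :
    cosetEquiv φ hφ U hU (Quotient.mk'' x) = Quotient.mk'' (φ x) := rfl

theorem cosetEquiv_smul (φ : G →* H) (hφ : Function.Surjective φ) (U : Subgroup G)
    (hU : φ.ker ≤ U) (x : G) (q : G ⧸ U) :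
    cosetEquiv φ hφ U hU (x • q) = φ x • cosetEquiv φ hφ U hU q := by
  refine Quotient.inductionOn' q fun a => ?_
  show (QuotientGroup.mk (φ (x * a)) : H ⧸ (U.map φ)) = φ x • (QuotientGroup.mk (φ a) : H ⧸ (U.map φ))
  rw [map_mul]
  exact (MulAction.Quotient.smul_mk (U.map φ) (φ x) (φ a)).symm

theorem transfer_map_eq (φ : G →* H) (hφ : Function.Surjective φ) (U : Subgroup G)
    [U.FiniteIndex] (hU : φ.ker ≤ U) [inst : (U.map φ).FiniteIndex]
    (ϕ : (U.map φ) →* A) (g : G) :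
    MonoidHom.transfer ϕ (φ g) = MonoidHom.transfer (ϕ.comp (φ.subgroupMap U)) g := by
  classical
  set e := cosetEquiv φ hφ U hU with he
  set T : U.LeftTransversal := default with hT
  set f : H ⧸ (U.map φ) → H := fun q => φ (T.2.leftQuotientEquiv (e.symm q)) with hf
  have hfq : ∀ q, (f q : H ⧸ (U.map φ)) = q := by
    intro q
    show Quotient.mk'' (f q) = q
    rw [hf]
    rw [← cosetEquiv_mk φ hφ U hU, IsComplement.quotientGroupMk_leftQuotientEquiv, Equiv.apply_symm_apply]
  set S : (U.map φ).LeftTransversal := ⟨Set.range f, isComplement_range_left hfq⟩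
    with hS
  have hSeq : ∀ q, (S.2.leftQuotientEquiv q : H) = f q := fun q => IsComplement.leftQuotientEquiv_apply hfq q
  rw [MonoidHom.transfer_def ϕ S (φ g), MonoidHom.transfer_def (ϕ.comp (φ.subgroupMap U)) T g]
  unfold Subgroup.leftTransversals.diff
  dsimp only
  letI : Fintype (G ⧸ U) := U.fintypeQuotientOfFiniteIndex
  letI : Fintype (H ⧸ (U.map φ)) := (U.map φ).fintypeQuotientOfFiniteIndex
  have h1 : ∀ q, ((S.2.leftQuotientEquiv q : H)) = φ (T.2.leftQuotientEquiv (e.symm q)) := hSeq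
  have h2 : ∀ q, (((φ g • S).2.leftQuotientEquiv q : H)) = φ (((g • T).2.leftQuotientEquiv (e.symm q) : G)) := by
    intro q
    rw [smul_apply_eq_smul_apply_inv_smul, smul_apply_eq_smul_apply_inv_smul, smul_eq_mul,
      smul_eq_mul, map_mul]
    congr 1
    have h3 : e.symm ((φ g)⁻¹ • q) = g⁻¹ • e.symm q := by
      rw [Equiv.symm_apply_eq, he, cosetEquiv_smul φ hφ U hU, map_inv, Equiv.apply_symm_apply]
    rw [h1, h3]
  refine Eq.symm (Fintype.prod_equiv e (fun p => _) (fun q => _) fun p => ?_)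
  simp only [MonoidHom.comp_apply]
  congr 1
  refine Subtype.ext ?_
  show φ ((T.2.leftQuotientEquiv p : G)⁻¹ * ((g • T).2.leftQuotientEquiv p : G)) =
    (S.2.leftQuotientEquiv (e p) : H)⁻¹ * ((φ g • S).2.leftQuotientEquiv (e p) : H)
  rw [map_mul, map_inv, h1 (e p), h2 (e p), Equiv.symm_apply_apply]

theorem transfer_comp_eq {U : Subgroup G} [U.FiniteIndex] {B : Type*} [CommGroup B]
    (ϕ : U →* A) (f : A →* B) (g : G) :
    MonoidHom.transfer (f.comp ϕ) g = f (MonoidHom.transfer ϕ g) := by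
  classical
  set T : U.LeftTransversal := default
  rw [MonoidHom.transfer_def (f.comp ϕ) T g, MonoidHom.transfer_def ϕ T g]
  unfold Subgroup.leftTransversals.diff
  rw [map_prod]
  rfl

end Nat

/-- For an epimorphism `φ : G → H` with `ker(φ) ≤ U'`, `U` of finite index, `V = φ(U)`:
the kernels of the Artin transfers correspond exactly,
`φ(ker T_{G,U}) = ker T_{H,V}`. -/
theorem stmt15 {G H : Type*} [Group G] [Group H] (φ : G →* H)
    (hφ : Function.Surjective φ) (U : Subgroup G) [U.FiniteIndex]
    (hker : φ.ker ≤ (commutator U).map U.subtype) :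
    ∀ inst : (U.map φ).FiniteIndex,
      Subgroup.map φ
          (MonoidHom.transfer (Abelianization.of : U →* Abelianization U)).ker =
        (@MonoidHom.transfer H _ (U.map φ) _ _
          (Abelianization.of : (U.map φ) →* Abelianization (U.map φ)) inst).ker := by
  intro inst
  haveI := inst
  have hU : φ.ker ≤ U := hker.trans (Subgroup.map_subtype_le _)
  set φ' : U →* (U.map φ) := φ.subgroupMap U with hφ'
  have hφ's : Function.Surjective φ' := φ.subgroupMap_surjective U
  set ψ : Abelianization U →* Abelianization (U.map φ) := Abelianization.map φ' with hψ
  -- injectivity of ψ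
  have hψinj : Function.Injective ψ := by
    have hkerψ : ∀ x, ψ x = 1 → x = 1 := by
      intro x hx
      obtain ⟨u, rfl⟩ : ∃ u, Abelianization.of u = x :=
        QuotientGroup.induction_on x fun z => ⟨z, rfl⟩
      · rw [hψ, Abelianization.map_of] at hx
        have hmem : φ' u ∈ commutator (U.map φ) := (QuotientGroup.eq_one_iff (φ' u)).mp hx
        have hcomm : commutator (U.map φ) = (commutator U).map φ' := by
          rw [commutator_def, commutator_def, Subgroup.map_commutator,
            Subgroup.map_top_of_surjective φ' hφ's]
        rw [hcomm] at hmem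
        obtain ⟨c, hc, hcu⟩ := hmem
        have : u * c⁻¹ ∈ commutator U := by
          have hk : ((u * c⁻¹ : U) : G) ∈ φ.ker := by
            rw [MonoidHom.mem_ker]
            have : φ' (u * c⁻¹) = 1 := by rw [map_mul, map_inv, ← hcu, mul_inv_cancel]
            exact congrArg Subtype.val this
          obtain ⟨k, hk1, hk2⟩ := hker hk
          have : k = u * c⁻¹ := Subtype.ext hk2
          rwa [this] at hk1
        have hu : u ∈ commutator U := by
          have := mul_mem this hc
          rwa [inv_mul_cancel_right] at this
        exact (QuotientGroup.eq_one_iff u).mpr hu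
    intro a b hab
    have : ψ (a * b⁻¹) = 1 := by rw [map_mul, map_inv, hab, mul_inv_cancel]
    have := hkerψ _ this
    rw [mul_inv_eq_one] at this
    exact this
  -- naturality
  have hnat : ∀ g : G,
      MonoidHom.transfer (Abelianization.of : (U.map φ) →* _) (φ g) =
        ψ (MonoidHom.transfer (Abelianization.of : U →* _) g) := by
    intro g
    rw [transfer_map_eq φ hφ U hU]
    have : (Abelianization.of : (U.map φ) →* _).comp φ' = ψ.comp Abelianization.of := by
      ext u
      simp [hψ]
    rw [this, transfer_comp_eq]
  ext h
  constructor
  · rintro ⟨g, hg, rfl⟩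
    have hg' : MonoidHom.transfer (Abelianization.of : U →* _) g = 1 := hg
    show MonoidHom.transfer _ (φ g) = 1
    rw [hnat, hg', map_one]
  · intro hh
    obtain ⟨g, rfl⟩ := hφ h
    have hh' : MonoidHom.transfer (Abelianization.of : (U.map φ) →* _) (φ g) = 1 := hh
    rw [hnat] at hh'
    refine ⟨g, ?_, rfl⟩
    show MonoidHom.transfer _ g = 1
    exact hψinj (by rw [hh', map_one])
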